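/- arXiv:2306.08750 — 3 statements merged into one kernel-verified Lean document; each statement's English description precedes it below -/
import Mathlib

section
/- Hessian quadratic-form bound for the smoothed loss: let ε > 0, so that L_ε is twice continuously differentiable as a real function of (Re z, Im z, Re v, Im v). Then for all z, v, u, h ∈ ℂ^d, the second real Fréchet derivative of L_ε at (z, v) evaluated at the pair ((u,h),(u,h)) satisfies the two-sided bound: it is at most 2·Σ_{r∈R}Σ_{k=1}^d |u^T Q_{r,k} v + z^T Q_{r,k} h|² + 4·(L_ε(z,v))^{1/2}·(Σ_{r∈R}Σ_{k=1}^d |u^T Q_{r,k} h|²)^{1/2}, and at least −4·(L_ε(z,v))^{1/2}·(Σ_{r∈R}Σ_{k=1}^d |u^T Q_{r,k} h|²)^{1/2} − 2·(max_{r,k}(y_{r,k}+ε)^{1/2}·ε^{−1/2} − 1)·Σ_{r∈R}Σ_{k=1}^d |u^T Q_{r,k} v + z^T Q_{r,k} h|². -/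
open scoped BigOperators Classical
open Finset

noncomputable section

namespace Ptycho

/-- Entry of the discrete Fourier matrix: `F_{k,j} = exp(-2πi·k·j/d)`. -/
def Fent (d : ℕ) (k j : ZMod d) : ℂ :=
  Complex.exp (-(2 * (Real.pi : ℂ) * Complex.I * (k.val : ℂ) * (j.val : ℂ)) / (d : ℂ))

/-- `[F (z ∘ S_r v)]_k`, i.e. the bilinear form `z^T Q_{r,k} v`. -/
def Qform (d : ℕ) [NeZero d] (r k : ZMod d) (z v : ZMod d → ℂ) : ℂ :=
  ∑ j : ZMod d, z j * Fent d k j * v (j - r)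

/-- Noiseless ptychographic measurement `|[F (x ∘ S_r w)]_k|²`. -/
def meas (d : ℕ) [NeZero d] (r k : ZMod d) (x w : ZMod d → ℂ) : ℝ :=
  ‖Qform d r k x w‖ ^ 2

/-- Squared Euclidean norm `‖u‖₂²`. -/
def nsq (d : ℕ) [NeZero d] (u : ZMod d → ℂ) : ℝ :=
  ∑ j : ZMod d, ‖u j‖ ^ 2

/-- Single-shift amplitude-based loss
`L_{r,ε}(z,v) = Σ_k (√(|z^T Q_{r,k} v|² + ε) − √(y_{r,k} + ε))²`. -/
def lossR (d : ℕ) [NeZero d] (y : ZMod d → ZMod d → ℝ) (ε : ℝ) (r : ZMod d)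
    (z v : ZMod d → ℂ) : ℝ :=
  ∑ k : ZMod d,
    (Real.sqrt (‖Qform d r k z v‖ ^ 2 + ε) - Real.sqrt (y r k + ε)) ^ 2

/-- Amplitude-based loss `L_ε(z,v) = Σ_{r∈R} L_{r,ε}(z,v)`. -/
def loss (d : ℕ) [NeZero d] (R : Finset (ZMod d)) (y : ZMod d → ZMod d → ℝ) (ε : ℝ)
    (z v : ZMod d → ℂ) : ℝ :=
  ∑ r ∈ R, lossR d y ε r z v

/-- Coefficient `1 − √(y_{r,k}+ε)/√(|z^T Q_{r,k} v|²+ε)` appearing in the Wirtinger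
gradients. (Lean's convention `a/0 = 0` realizes the paper's convention, since the
coefficient is always multiplied by `z^T Q_{r,k} v`.) -/
def coef (ε yrk : ℝ) (c : ℂ) : ℝ :=
  1 - Real.sqrt (yrk + ε) / Real.sqrt (‖c‖ ^ 2 + ε)

/-- Wirtinger gradient `∇_z L_{r,ε}(z,v)`; note `(Q_{r,k} v)_j = F_{k,j}·v_{j−r}`. -/
def gradZr (d : ℕ) [NeZero d] (y : ZMod d → ZMod d → ℝ) (ε : ℝ) (r : ZMod d)
    (z v : ZMod d → ℂ) : ZMod d → ℂ := fun j =>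
  ∑ k : ZMod d, (coef ε (y r k) (Qform d r k z v) : ℂ) * Qform d r k z v *
    (starRingEnd ℂ) (Fent d k j * v (j - r))

/-- Wirtinger gradient `∇_v L_{r,ε}(z,v)`; note `(Q_{r,k}^T z)_j = F_{k,j+r}·z_{j+r}`. -/
def gradVr (d : ℕ) [NeZero d] (y : ZMod d → ZMod d → ℝ) (ε : ℝ) (r : ZMod d)
    (z v : ZMod d → ℂ) : ZMod d → ℂ := fun j =>
  ∑ k : ZMod d, (coef ε (y r k) (Qform d r k z v) : ℂ) * Qform d r k z v *
    (starRingEnd ℂ) (Fent d k (j + r) * z (j + r))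

/-- Regularized loss `J(z,v) = L_ε(z,v) + α_T‖z‖₂² + β_T‖v‖₂²`. -/
def Jfun (d : ℕ) [NeZero d] (R : Finset (ZMod d)) (y : ZMod d → ZMod d → ℝ)
    (ε αT βT : ℝ) (z v : ZMod d → ℂ) : ℝ :=
  loss d R y ε z v + αT * nsq d z + βT * nsq d v

/-- Wirtinger gradient `∇_z J(z,v) = ∇_z L_ε(z,v) + α_T z`. -/
def gradZJ (d : ℕ) [NeZero d] (R : Finset (ZMod d)) (y : ZMod d → ZMod d → ℝ)
    (ε αT : ℝ) (z v : ZMod d → ℂ) : ZMod d → ℂ := fun j =>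
  (∑ r ∈ R, gradZr d y ε r z v j) + (αT : ℂ) * z j

/-- Wirtinger gradient `∇_v J(z,v) = ∇_v L_ε(z,v) + β_T v`. -/
def gradVJ (d : ℕ) [NeZero d] (R : Finset (ZMod d)) (y : ZMod d → ZMod d → ℝ)
    (ε βT : ℝ) (z v : ZMod d → ℂ) : ZMod d → ℂ := fun j =>
  (∑ r ∈ R, gradVr d y ε r z v j) + (βT : ℂ) * v j

/-- `‖y/d‖₁ = (1/d)·Σ_{r∈R} Σ_k y_{r,k}`. -/
def yd1 (d : ℕ) [NeZero d] (R : Finset (ZMod d)) (y : ZMod d → ZMod d → ℝ) : ℝ :=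
  (∑ r ∈ R, ∑ k : ZMod d, y r k) / d

/-- Real part of the Hermitian inner product `Re(u* g)`. -/
def reInner (d : ℕ) [NeZero d] (u g : ZMod d → ℂ) : ℝ :=
  (∑ j : ZMod d, (starRingEnd ℂ) (u j) * g j).re

/-- `B(z,v) = 3d·((10/3)‖z‖₂² + (10/3)‖v‖₂² + ‖y/d‖₁^{1/2}) + 3·max{α_T, β_T}`. -/
def Bfun (d : ℕ) [NeZero d] (R : Finset (ZMod d)) (y : ZMod d → ZMod d → ℝ)
    (αT βT : ℝ) (z v : ZMod d → ℂ) : ℝ :=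
  3 * d * ((10 / 3) * nsq d z + (10 / 3) * nsq d v + Real.sqrt (yd1 d R y)) +
    3 * max αT βT


/-! ### Auxiliary machinery for the Hessian bound -/

section LineDeriv

/-- For a `C²` function, the second Fréchet derivative along a repeated direction equals the
second derivative of the restriction to the line through `x` in direction `w`. -/
theorem line_second_deriv {E : Type*} [NormedAddCommGroup E] [NormedSpace ℝ E]
    (f : E → ℝ) (hf : ContDiff ℝ 2 f) (x w : E) :
    iteratedFDeriv ℝ 2 f x ![w, w] = deriv (deriv (fun t : ℝ => f (x + t • w))) 0 := by
  have hγ : ∀ t : ℝ, HasDerivAt (fun t : ℝ => x + t • w) w t := by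
    intro t
    simpa using ((hasDerivAt_id t).smul_const w).const_add x
  have hd1 : ∀ t : ℝ, HasDerivAt (fun t : ℝ => f (x + t • w))
      (fderiv ℝ f (x + t • w) w) t := by
    intro t
    exact ((hf.differentiable (by norm_num)).differentiableAt.hasFDerivAt).comp_hasDerivAt t (hγ t)
  have h1 : deriv (fun t : ℝ => f (x + t • w)) = fun t => fderiv ℝ f (x + t • w) w := by
    funext t; exact (hd1 t).deriv
  rw [h1]
  have hf' : ContDiff ℝ 1 (fderiv ℝ f) := hf.fderiv_right (by norm_num)
  have hd2 : HasDerivAt (fun t : ℝ => fderiv ℝ f (x + t • w) w)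
      (fderiv ℝ (fderiv ℝ f) x w w) 0 := by
    have hA : HasDerivAt (fun t : ℝ => fderiv ℝ f (x + t • w))
        (fderiv ℝ (fderiv ℝ f) x w) 0 := by
      have hx0 : x + (0:ℝ) • w = x := by simp
      exact HasFDerivAt.comp_hasDerivAt_of_eq
          (hl := (hf'.differentiable (by norm_num)).differentiableAt.hasFDerivAt (x := x))
          (hf := hγ 0) (hy := hx0.symm)
    exact (ContinuousLinearMap.apply ℝ ℝ w).hasFDerivAt.comp_hasDerivAt 0 hA
  rw [hd2.deriv, iteratedFDeriv_two_apply]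
  simp

end LineDeriv

section OneDim

/-- `|a + t b + t² c|²` as a function of the real parameter `t`. -/
def Nfun (a b c : ℂ) (t : ℝ) : ℝ := Complex.normSq (a + t*b + t^2*c)

/-- The derivative of `Nfun`. -/
def Ndfun (a b c : ℂ) (t : ℝ) : ℝ :=
  2*((a.re + t*b.re + t^2*c.re)*(b.re + 2*t*c.re) + (a.im + t*b.im + t^2*c.im)*(b.im + 2*t*c.im))

lemma Nfun_eq (a b c : ℂ) (t : ℝ) :
    Nfun a b c t = (a.re + t*b.re + t^2*c.re)^2 + (a.im + t*b.im + t^2*c.im)^2 := by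
  simp [Nfun, Complex.normSq_apply, Complex.add_re, Complex.add_im, Complex.mul_re,
    Complex.mul_im, Complex.ofReal_re, Complex.ofReal_im, ← Complex.ofReal_pow]
  ring

lemma hasDerivAt_re_part (x y z t : ℝ) :
    HasDerivAt (fun t : ℝ => x + t*y + t^2*z) (y + 2*t*z) t := by
  have h1 : HasDerivAt (fun t : ℝ => t*y) y t := by simpa using (hasDerivAt_id t).mul_const y
  have h2 : HasDerivAt (fun t : ℝ => t^2*z) (2*t*z) t := by
    have := (hasDerivAt_pow 2 t).mul_const z
    refine this.congr_deriv (Eq.symm ?_)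
    push_cast; ring
  simpa [add_assoc] using (h1.add h2).const_add x

lemma hasDerivAt_Nfun (a b c : ℂ) (t : ℝ) :
    HasDerivAt (Nfun a b c) (Ndfun a b c t) t := by
  have h : Nfun a b c = fun t => (a.re + t*b.re + t^2*c.re)^2 + (a.im + t*b.im + t^2*c.im)^2 :=
    funext fun t => Nfun_eq a b c t
  rw [h]
  have hA := (hasDerivAt_re_part a.re b.re c.re t).pow 2
  have hB := (hasDerivAt_re_part a.im b.im c.im t).pow 2
  refine (hA.add hB).congr_deriv (Eq.symm ?_)
  simp [Ndfun]
  ring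

lemma Nfun_nonneg (a b c : ℂ) (t : ℝ) : 0 ≤ Nfun a b c t := Complex.normSq_nonneg _

/-- First derivative of the one-dimensional loss term. -/
def G1fun (a b c : ℂ) (m ε : ℝ) (t : ℝ) : ℝ :=
  (Real.sqrt (Nfun a b c t + ε) - m) * Ndfun a b c t / Real.sqrt (Nfun a b c t + ε)

lemma hasDerivAt_sqrtN (a b c : ℂ) {ε : ℝ} (hε : 0 < ε) (t : ℝ) :
    HasDerivAt (fun t => Real.sqrt (Nfun a b c t + ε))
      (1 / (2 * Real.sqrt (Nfun a b c t + ε)) * Ndfun a b c t) t := by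
  have hpos : 0 < Nfun a b c t + ε := add_pos_of_nonneg_of_pos (Nfun_nonneg a b c t) hε
  exact (Real.hasDerivAt_sqrt hpos.ne').comp t ((hasDerivAt_Nfun a b c t).add_const ε)

lemma hasDerivAt_term (a b c : ℂ) (m : ℝ) {ε : ℝ} (hε : 0 < ε) (t : ℝ) :
    HasDerivAt (fun t => (Real.sqrt (Nfun a b c t + ε) - m)^2) (G1fun a b c m ε t) t := by
  have hpos : 0 < Nfun a b c t + ε := add_pos_of_nonneg_of_pos (Nfun_nonneg a b c t) hε
  have hs0 : Real.sqrt (Nfun a b c t + ε) ≠ 0 := (Real.sqrt_pos.mpr hpos).ne'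
  have := ((hasDerivAt_sqrtN a b c hε t).sub_const m).pow 2
  refine this.congr_deriv (Eq.symm ?_)
  simp only [G1fun]
  field_simp
  ring

lemma hasDerivAt_lin (x y t : ℝ) : HasDerivAt (fun t : ℝ => x + 2*t*y) (2*y) t := by
  have h1 : HasDerivAt (fun t : ℝ => 2*t*y) (2*y) t := by
    have := ((hasDerivAt_id t).const_mul 2).mul_const y
    refine this.congr_deriv (Eq.symm ?_); ring
  simpa using h1.const_add x

lemma hasDerivAt_Ndfun (a b c : ℂ) (t : ℝ) :
    HasDerivAt (Ndfun a b c)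
      (2*((b.re + 2*t*c.re)^2 + (a.re + t*b.re + t^2*c.re)*(2*c.re)
        + ((b.im + 2*t*c.im)^2 + (a.im + t*b.im + t^2*c.im)*(2*c.im)))) t := by
  have hA := (hasDerivAt_re_part a.re b.re c.re t).mul (hasDerivAt_lin b.re c.re t)
  have hB := (hasDerivAt_re_part a.im b.im c.im t).mul (hasDerivAt_lin b.im c.im t)
  have := ((hA.add hB).const_mul 2)
  refine this.congr_deriv (Eq.symm ?_)
  ring

/-- Second derivative at `t = 0` of the one-dimensional loss term. -/
def Dval (a b c : ℂ) (m ε : ℝ) : ℝ :=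
  2*(Complex.normSq b + 2*(a.re*c.re + a.im*c.im)) * (1 - m / Real.sqrt (Complex.normSq a + ε))
  + 2*m*(a.re*b.re + a.im*b.im)^2
      / ((Complex.normSq a + ε) * Real.sqrt (Complex.normSq a + ε))

lemma hasDerivAt_G1 (a b c : ℂ) (m : ℝ) {ε : ℝ} (hε : 0 < ε) :
    HasDerivAt (G1fun a b c m ε) (Dval a b c m ε) 0 := by
  have hpos : 0 < Nfun a b c 0 + ε := add_pos_of_nonneg_of_pos (Nfun_nonneg a b c 0) hε
  have hS0 : 0 < Real.sqrt (Nfun a b c 0 + ε) := Real.sqrt_pos.mpr hpos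
  have hS := hasDerivAt_sqrtN a b c hε 0
  have hNd := hasDerivAt_Ndfun a b c 0
  have hdiv := ((hS.sub_const m).mul hNd).div hS hS0.ne'
  have hN0 : Nfun a b c 0 = Complex.normSq a := by simp [Nfun]
  have hNd0 : Ndfun a b c 0 = 2*(a.re*b.re + a.im*b.im) := by simp [Ndfun]
  refine hdiv.congr_deriv (Eq.symm ?_)
  simp only [Dval, hN0, hNd0, Pi.mul_apply]
  have hsq : Real.sqrt (Complex.normSq a + ε) ^ 2 = Complex.normSq a + ε := by
    rw [Real.sq_sqrt]; rw [hN0] at hpos; exact hpos.le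
  set S := Real.sqrt (Complex.normSq a + ε) with hSdef
  rw [hN0] at hS0
  rw [← hsq]
  have hSne : S ≠ 0 := hS0.ne'
  field_simp
  simp only [Complex.normSq_apply]
  ring

end OneDim

section TermBounds

lemma abs_dot_le (a b : ℂ) : |a.re*b.re + a.im*b.im| ≤ ‖a‖ * ‖b‖ := by
  have h1 := Complex.abs_re_le_norm ((starRingEnd ℂ) a * b)
  rw [norm_mul, Complex.norm_conj] at h1
  have h2 : ((starRingEnd ℂ) a * b).re = a.re*b.re + a.im*b.im := by
    simp [Complex.mul_re]
    try ring
  rwa [h2] at h1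

lemma Dval_decomp (a b c : ℂ) (m ε : ℝ) :
    Dval a b c m ε =
      2*Complex.normSq b*(1 - m / Real.sqrt (Complex.normSq a + ε))
      + 4*(a.re*c.re + a.im*c.im)*(1 - m / Real.sqrt (Complex.normSq a + ε))
      + 2*m*(a.re*b.re + a.im*b.im)^2
          / ((Complex.normSq a + ε) * Real.sqrt (Complex.normSq a + ε)) := by
  simp only [Dval]; ring

variable (a b c : ℂ) {m ε K : ℝ}

lemma facts1 (hε : 0 < ε) :
    0 < Real.sqrt (Complex.normSq a + ε) ∧
    Real.sqrt (Complex.normSq a + ε)^2 = Complex.normSq a + ε ∧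
    ‖a‖ ≤ Real.sqrt (Complex.normSq a + ε) := by
  have hpos : 0 < Complex.normSq a + ε := add_pos_of_nonneg_of_pos (Complex.normSq_nonneg a) hε
  have hS : 0 < Real.sqrt (Complex.normSq a + ε) := Real.sqrt_pos.mpr hpos
  refine ⟨hS, Real.sq_sqrt hpos.le, ?_⟩
  rw [← Real.sqrt_sq (norm_nonneg a), Complex.sq_norm]
  exact Real.sqrt_le_sqrt (by linarith)

lemma t2_abs_le (hε : 0 < ε) :
    |4*(a.re*c.re + a.im*c.im)*(1 - m / Real.sqrt (Complex.normSq a + ε))|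
      ≤ 4 * |Real.sqrt (Complex.normSq a + ε) - m| * ‖c‖ := by
  obtain ⟨hS, hsq, hA⟩ := facts1 a hε
  set S := Real.sqrt (Complex.normSq a + ε)
  have h1 : (1 : ℝ) - m / S = (S - m)/S := by field_simp
  rw [h1, abs_mul, abs_mul, abs_div, abs_of_pos hS]
  have hγ := abs_dot_le a c
  calc |(4:ℝ)| * |a.re*c.re + a.im*c.im| * (|S - m|/S)
      ≤ |(4:ℝ)| * (‖a‖ * ‖c‖) * (|S - m|/S) := by
        gcongr
    _ ≤ |(4:ℝ)| * (S * ‖c‖) * (|S - m|/S) := by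
        gcongr
    _ = 4 * |S - m| * ‖c‖ := by
        field_simp
        ring

lemma Dval_le (hε : 0 < ε) (hm : 0 ≤ m) :
    Dval a b c m ε ≤ 2 * ‖b‖ ^ 2
      + 4 * |Real.sqrt (Complex.normSq a + ε) - m| * ‖c‖ := by
  obtain ⟨hS, hsq, hA⟩ := facts1 a hε
  have ht2 := t2_abs_le a c (m := m) hε
  rw [Dval_decomp]
  set S := Real.sqrt (Complex.normSq a + ε) with hSdef
  have hα := abs_dot_le a b
  have hα2 : (a.re*b.re + a.im*b.im)^2 ≤ (Complex.normSq a + ε) * Complex.normSq b := by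
    calc (a.re*b.re + a.im*b.im)^2 = |a.re*b.re + a.im*b.im|^2 := (sq_abs _).symm
      _ ≤ (‖a‖ * ‖b‖)^2 := by
          gcongr
      _ = ‖a‖^2 * ‖b‖^2 := by ring
      _ ≤ (Complex.normSq a + ε) * Complex.normSq b := by
          rw [Complex.sq_norm, Complex.sq_norm]
          gcongr
          · exact Complex.normSq_nonneg b
          · linarith
  have ht3 : 2*m*(a.re*b.re + a.im*b.im)^2 / ((Complex.normSq a + ε) * S)
      ≤ 2*m*Complex.normSq b/S := by
    have hpos : 0 < Complex.normSq a + ε := add_pos_of_nonneg_of_pos (Complex.normSq_nonneg a) hε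
    calc 2*m*(a.re*b.re + a.im*b.im)^2 / ((Complex.normSq a + ε) * S)
        ≤ 2*m*((Complex.normSq a + ε) * Complex.normSq b) / ((Complex.normSq a + ε) * S) := by
          gcongr
      _ = 2*m*Complex.normSq b/S := by
          field_simp
  have ht1 : 2*Complex.normSq b*(1 - m/S) = 2*Complex.normSq b - 2*m*Complex.normSq b/S := by
    ring
  have habsb : Complex.normSq b = ‖b‖ ^ 2 := (Complex.sq_norm b).symm
  have h2 : 4*(a.re*c.re + a.im*c.im)*(1 - m / S)
      ≤ 4 * |S - m| * ‖c‖ := le_trans (le_abs_self _) ht2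
  rw [← habsb]
  linarith

lemma le_Dval (hε : 0 < ε) (hm : 0 ≤ m) (hK : 0 ≤ K) (hmK : m ≤ (K+1) * Real.sqrt ε) :
    -(4 * |Real.sqrt (Complex.normSq a + ε) - m| * ‖c‖)
      - 2*K*‖b‖^2 ≤ Dval a b c m ε := by
  obtain ⟨hS, hsq, hA⟩ := facts1 a hε
  have ht2 := t2_abs_le a c (m := m) hε
  rw [Dval_decomp]
  set S := Real.sqrt (Complex.normSq a + ε) with hSdef
  have hpos : 0 < Complex.normSq a + ε := add_pos_of_nonneg_of_pos (Complex.normSq_nonneg a) hε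
  have ht3 : 0 ≤ 2*m*(a.re*b.re + a.im*b.im)^2 / ((Complex.normSq a + ε) * S) := by
    apply div_nonneg
    · positivity
    · exact le_of_lt (mul_pos hpos hS)
  have h2 : -(4 * |S - m| * ‖c‖) ≤ 4*(a.re*c.re + a.im*c.im)*(1 - m / S) :=
    (abs_le.mp ht2).1
  have hSe : Real.sqrt ε ≤ S := Real.sqrt_le_sqrt (by linarith [Complex.normSq_nonneg a])
  have hse : 0 < Real.sqrt ε := Real.sqrt_pos.mpr hε
  have hms : m / S ≤ K + 1 := by
    calc m / S ≤ m / Real.sqrt ε := div_le_div_of_nonneg_left hm hse hSe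
      _ ≤ K + 1 := by rw [div_le_iff₀ hse]; exact hmK
  have h1 : -K ≤ 1 - m / S := by linarith
  have ht1 : 2*Complex.normSq b*(-K) ≤ 2*Complex.normSq b*(1 - m/S) := by
    apply mul_le_mul_of_nonneg_left h1
    have := Complex.normSq_nonneg b
    linarith
  have habsb : ‖b‖ ^ 2 = Complex.normSq b := Complex.sq_norm b
  rw [habsb]
  nlinarith [ht1, h2, ht3]

end TermBounds

section Glue

lemma Qform_contDiff (d : ℕ) [NeZero d] (r k : ZMod d) {n : WithTop ℕ∞} :
    ContDiff ℝ n (fun p : (ZMod d → ℂ) × (ZMod d → ℂ) => Qform d r k p.1 p.2) := by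
  unfold Qform
  apply ContDiff.sum
  intro j _
  have h1 : ContDiff ℝ n (fun p : (ZMod d → ℂ) × (ZMod d → ℂ) => p.1 j) :=
    (ContinuousLinearMap.proj (R := ℝ) (φ := fun _ : ZMod d => ℂ) j).contDiff.comp contDiff_fst
  have h2 : ContDiff ℝ n (fun p : (ZMod d → ℂ) × (ZMod d → ℂ) => p.2 (j - r)) :=
    (ContinuousLinearMap.proj (R := ℝ) (φ := fun _ : ZMod d => ℂ) (j - r)).contDiff.comp
      contDiff_snd
  exact (h1.mul contDiff_const).mul h2

lemma term_contDiff (d : ℕ) [NeZero d] (r k : ZMod d) (m : ℝ) {ε : ℝ} (hε : 0 < ε) :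
    ContDiff ℝ 2 (fun p : (ZMod d → ℂ) × (ZMod d → ℂ) =>
      (Real.sqrt (‖Qform d r k p.1 p.2‖ ^ 2 + ε) - m) ^ 2) := by
  have hn : ContDiff ℝ 2 (fun p : (ZMod d → ℂ) × (ZMod d → ℂ) =>
      ‖Qform d r k p.1 p.2‖ ^ 2 + ε) := by
    have heq : (fun p : (ZMod d → ℂ) × (ZMod d → ℂ) =>
        ‖Qform d r k p.1 p.2‖ ^ 2 + ε) = fun p =>
        (Complex.reCLM (Qform d r k p.1 p.2)) * (Complex.reCLM (Qform d r k p.1 p.2)) +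
        (Complex.imCLM (Qform d r k p.1 p.2)) * (Complex.imCLM (Qform d r k p.1 p.2)) + ε := by
      funext p
      rw [Complex.sq_norm, Complex.normSq_apply]
      rfl
    rw [heq]
    have hQ := Qform_contDiff d r k (n := 2)
    have hre := Complex.reCLM.contDiff.comp hQ
    have him := Complex.imCLM.contDiff.comp hQ
    exact ((hre.mul hre).add (him.mul him)).add contDiff_const
  apply ContDiff.pow
  apply ContDiff.sub _ contDiff_const
  rw [contDiff_iff_contDiffAt]
  intro p
  have hpos : (0:ℝ) < ‖Qform d r k p.1 p.2‖ ^ 2 + ε := by positivity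
  exact (Real.contDiffAt_sqrt hpos.ne').comp p hn.contDiffAt

lemma loss_contDiff (d : ℕ) [NeZero d] (R : Finset (ZMod d)) (y : ZMod d → ZMod d → ℝ)
    {ε : ℝ} (hε : 0 < ε) :
    ContDiff ℝ 2 (fun zv : (ZMod d → ℂ) × (ZMod d → ℂ) => loss d R y ε zv.1 zv.2) := by
  unfold loss lossR
  apply ContDiff.sum
  intro r _
  apply ContDiff.sum
  intro k _
  exact term_contDiff d r k _ hε

lemma Qform_line (d : ℕ) [NeZero d] (r k : ZMod d) (z v u h : ZMod d → ℂ) (t : ℝ) :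
    Qform d r k (z + t • u) (v + t • h)
      = Qform d r k z v + (t:ℂ) * (Qform d r k u v + Qform d r k z h)
        + (t:ℂ)^2 * Qform d r k u h := by
  simp only [Qform, Finset.mul_sum, ← Finset.sum_add_distrib]
  apply Finset.sum_congr rfl
  intro j _
  simp only [Pi.add_apply, Pi.smul_apply, Complex.real_smul]
  ring

lemma Nfun_line (d : ℕ) [NeZero d] (r k : ZMod d) (z v u h : ZMod d → ℂ) (t : ℝ) :
    ‖Qform d r k (z + t • u) (v + t • h)‖ ^ 2
      = Nfun (Qform d r k z v) (Qform d r k u v + Qform d r k z h) (Qform d r k u h) t := by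
  rw [Complex.sq_norm, Nfun, Qform_line]

lemma nested_CS (d : ℕ) [NeZero d] (R : Finset (ZMod d)) (e f : ZMod d → ZMod d → ℝ) :
    ∑ r ∈ R, ∑ k : ZMod d, e r k * f r k ≤
      Real.sqrt (∑ r ∈ R, ∑ k : ZMod d, (e r k)^2) *
      Real.sqrt (∑ r ∈ R, ∑ k : ZMod d, (f r k)^2) := by
  rw [← Real.sqrt_mul (by positivity)]
  rw [← Finset.sum_product' (f := fun r k => e r k * f r k),
      ← Finset.sum_product' (f := fun r k => (e r k)^2),
      ← Finset.sum_product' (f := fun r k => (f r k)^2)]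
  rcases le_or_gt (∑ p ∈ R ×ˢ univ, e p.1 p.2 * f p.1 p.2) 0 with hle | hlt
  · exact le_trans hle (Real.sqrt_nonneg _)
  · rw [Real.le_sqrt hlt.le (by positivity)]
    exact Finset.sum_mul_sq_le_sq_mul_sq _ _ _

end Glue

/-- **Hessian quadratic-form bound for the smoothed loss** (`ε > 0`): `L_ε` is twice
continuously differentiable as a real function on `ℂ^d × ℂ^d ≅ ℝ^{4d}`, and its second
real Fréchet derivative at `(z,v)` evaluated at `((u,h),(u,h))` is bounded above by
`2·Σ|u^T Q v + z^T Q h|² + 4·√(L_ε(z,v))·√(Σ|u^T Q h|²)` and below by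
`−4·√(L_ε(z,v))·√(Σ|u^T Q h|²) − 2·(max_{r,k}√(y+ε)/√ε − 1)·Σ|u^T Q v + z^T Q h|²`. -/
theorem hessian_quadratic_form_bound (d : ℕ) [NeZero d]
    (R : Finset (ZMod d)) (hR : R.Nonempty)
    (y : ZMod d → ZMod d → ℝ) (hy : ∀ r ∈ R, ∀ k : ZMod d, 0 ≤ y r k)
    (ε : ℝ) (hε : 0 < ε) :
    ContDiff ℝ 2 (fun zv : (ZMod d → ℂ) × (ZMod d → ℂ) => loss d R y ε zv.1 zv.2) ∧
    ∀ z v u h : ZMod d → ℂ,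
      (iteratedFDeriv ℝ 2
          (fun zv : (ZMod d → ℂ) × (ZMod d → ℂ) => loss d R y ε zv.1 zv.2)
          (z, v) ![(u, h), (u, h)]
        ≤ 2 * (∑ r ∈ R, ∑ k : ZMod d,
              ‖Qform d r k u v + Qform d r k z h‖ ^ 2)
          + 4 * Real.sqrt (loss d R y ε z v) *
              Real.sqrt (∑ r ∈ R, ∑ k : ZMod d, ‖Qform d r k u h‖ ^ 2)) ∧
      (-(4 * Real.sqrt (loss d R y ε z v) *
              Real.sqrt (∑ r ∈ R, ∑ k : ZMod d, ‖Qform d r k u h‖ ^ 2))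
          - 2 * (Real.sqrt ((R.sup' hR fun r =>
                  Finset.univ.sup' ⟨0, Finset.mem_univ 0⟩ fun k => y r k + ε))
                / Real.sqrt ε - 1) *
              (∑ r ∈ R, ∑ k : ZMod d,
                ‖Qform d r k u v + Qform d r k z h‖ ^ 2)
        ≤ iteratedFDeriv ℝ 2
            (fun zv : (ZMod d → ℂ) × (ZMod d → ℂ) => loss d R y ε zv.1 zv.2)
            (z, v) ![(u, h), (u, h)]) := by
  have hC : ContDiff ℝ 2
      (fun zv : (ZMod d → ℂ) × (ZMod d → ℂ) => loss d R y ε zv.1 zv.2) :=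
    loss_contDiff d R y hε
  refine ⟨hC, ?_⟩
  intro z v u h
  have key : iteratedFDeriv ℝ 2
      (fun zv : (ZMod d → ℂ) × (ZMod d → ℂ) => loss d R y ε zv.1 zv.2) (z, v)
      ![(u, h), (u, h)]
      = ∑ r ∈ R, ∑ k : ZMod d,
          Dval (Qform d r k z v) (Qform d r k u v + Qform d r k z h) (Qform d r k u h)
            (Real.sqrt (y r k + ε)) ε := by
    have hline := line_second_deriv _ hC (z, v) (u, h)
    rw [hline]
    have hg : (fun t : ℝ =>
        (fun zv : (ZMod d → ℂ) × (ZMod d → ℂ) => loss d R y ε zv.1 zv.2)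
          ((z, v) + t • (u, h)))
        = fun t => ∑ r ∈ R, ∑ k : ZMod d,
            (Real.sqrt (Nfun (Qform d r k z v) (Qform d r k u v + Qform d r k z h)
              (Qform d r k u h) t + ε) - Real.sqrt (y r k + ε))^2 := by
      funext t
      show loss d R y ε (z + t • u) (v + t • h) = _
      unfold loss lossR
      refine Finset.sum_congr rfl fun r _ => Finset.sum_congr rfl fun k _ => ?_
      rw [Nfun_line d r k z v u h t]
    rw [hg]
    have h1 : ∀ t : ℝ, HasDerivAt
        (fun t => ∑ r ∈ R, ∑ k : ZMod d,
          (Real.sqrt (Nfun (Qform d r k z v) (Qform d r k u v + Qform d r k z h)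
            (Qform d r k u h) t + ε) - Real.sqrt (y r k + ε))^2)
        (∑ r ∈ R, ∑ k : ZMod d, G1fun (Qform d r k z v)
          (Qform d r k u v + Qform d r k z h) (Qform d r k u h)
          (Real.sqrt (y r k + ε)) ε t) t := fun t =>
      HasDerivAt.fun_sum fun r _ => HasDerivAt.fun_sum fun k _ => hasDerivAt_term _ _ _ _ hε t
    have hd1 : deriv (fun t => ∑ r ∈ R, ∑ k : ZMod d,
        (Real.sqrt (Nfun (Qform d r k z v) (Qform d r k u v + Qform d r k z h)
          (Qform d r k u h) t + ε) - Real.sqrt (y r k + ε))^2)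
        = fun t => ∑ r ∈ R, ∑ k : ZMod d, G1fun (Qform d r k z v)
          (Qform d r k u v + Qform d r k z h) (Qform d r k u h)
          (Real.sqrt (y r k + ε)) ε t := funext fun t => (h1 t).deriv
    rw [hd1]
    exact (HasDerivAt.fun_sum fun r _ =>
      HasDerivAt.fun_sum fun k _ => hasDerivAt_G1 _ _ _ _ hε).deriv
  -- Cauchy–Schwarz ingredient
  have hLe : ∑ r ∈ R, ∑ k : ZMod d,
      (|Real.sqrt (Complex.normSq (Qform d r k z v) + ε) - Real.sqrt (y r k + ε)|)^2
      = loss d R y ε z v := by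
    unfold loss lossR
    refine Finset.sum_congr rfl fun r _ => Finset.sum_congr rfl fun k _ => ?_
    rw [_root_.sq_abs, Complex.sq_norm]
  have hcs := nested_CS d R
    (fun r k => |Real.sqrt (Complex.normSq (Qform d r k z v) + ε) - Real.sqrt (y r k + ε)|)
    (fun r k => ‖Qform d r k u h‖)
  rw [hLe] at hcs
  have habsf : ∑ r ∈ R, ∑ k : ZMod d, (‖Qform d r k u h‖)^2
      = ∑ r ∈ R, ∑ k : ZMod d, ‖Qform d r k u h‖^2 := rfl
  rw [habsf] at hcs
  constructor
  · -- upper bound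
    rw [key]
    have hub : ∑ r ∈ R, ∑ k : ZMod d,
        Dval (Qform d r k z v) (Qform d r k u v + Qform d r k z h) (Qform d r k u h)
          (Real.sqrt (y r k + ε)) ε
        ≤ ∑ r ∈ R, ∑ k : ZMod d,
          (2 * ‖Qform d r k u v + Qform d r k z h‖ ^ 2
            + 4 * (|Real.sqrt (Complex.normSq (Qform d r k z v) + ε)
                - Real.sqrt (y r k + ε)| * ‖Qform d r k u h‖)) := by
      refine Finset.sum_le_sum fun r _ => Finset.sum_le_sum fun k _ => ?_
      have := Dval_le (Qform d r k z v) (Qform d r k u v + Qform d r k z h)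
        (Qform d r k u h) hε (Real.sqrt_nonneg (y r k + ε))
      calc Dval (Qform d r k z v) (Qform d r k u v + Qform d r k z h) (Qform d r k u h)
            (Real.sqrt (y r k + ε)) ε
          ≤ 2 * ‖Qform d r k u v + Qform d r k z h‖ ^ 2
            + 4 * |Real.sqrt (Complex.normSq (Qform d r k z v) + ε)
                - Real.sqrt (y r k + ε)| * ‖Qform d r k u h‖ := this
        _ = _ := by ring
    have hsplit : ∑ r ∈ R, ∑ k : ZMod d,
        (2 * ‖Qform d r k u v + Qform d r k z h‖ ^ 2
          + 4 * (|Real.sqrt (Complex.normSq (Qform d r k z v) + ε)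
              - Real.sqrt (y r k + ε)| * ‖Qform d r k u h‖))
        = 2 * (∑ r ∈ R, ∑ k : ZMod d,
              ‖Qform d r k u v + Qform d r k z h‖ ^ 2)
          + 4 * (∑ r ∈ R, ∑ k : ZMod d,
              |Real.sqrt (Complex.normSq (Qform d r k z v) + ε)
                - Real.sqrt (y r k + ε)| * ‖Qform d r k u h‖) := by
      simp only [Finset.sum_add_distrib, ← Finset.mul_sum]
    rw [hsplit] at hub
    have hfin : 4 * (∑ r ∈ R, ∑ k : ZMod d,
        |Real.sqrt (Complex.normSq (Qform d r k z v) + ε)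
          - Real.sqrt (y r k + ε)| * ‖Qform d r k u h‖)
        ≤ 4 * (Real.sqrt (loss d R y ε z v) *
            Real.sqrt (∑ r ∈ R, ∑ k : ZMod d, ‖Qform d r k u h‖ ^ 2)) := by
      linarith
    linarith
  · -- lower bound
    rw [key]
    set Ksup := R.sup' hR fun r =>
      Finset.univ.sup' ⟨0, Finset.mem_univ 0⟩ fun k => y r k + ε with hKsup
    have hsup : ∀ r ∈ R, ∀ k : ZMod d, y r k + ε ≤ Ksup := by
      intro r hr k
      calc y r k + ε
          ≤ Finset.univ.sup' ⟨0, Finset.mem_univ 0⟩ (fun k => y r k + ε) :=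
            Finset.le_sup' (fun k => y r k + ε) (Finset.mem_univ k)
        _ ≤ Ksup := Finset.le_sup'
            (fun r => Finset.univ.sup' ⟨0, Finset.mem_univ 0⟩ fun k => y r k + ε) hr
    have hse : 0 < Real.sqrt ε := Real.sqrt_pos.mpr hε
    obtain ⟨r0, hr0⟩ := hR
    have hεsup : ε ≤ Ksup :=
      le_trans (by linarith [hy r0 hr0 0]) (hsup r0 hr0 0)
    set K := Real.sqrt Ksup / Real.sqrt ε - 1 with hKdef
    have hsupe : Real.sqrt ε ≤ Real.sqrt Ksup := Real.sqrt_le_sqrt hεsup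
    have hK : 0 ≤ K := by
      rw [hKdef, sub_nonneg, le_div_iff₀ hse]
      simpa using hsupe
    have hK1 : (K + 1) * Real.sqrt ε = Real.sqrt Ksup := by
      rw [hKdef]
      field_simp
      ring
    have hmK : ∀ r ∈ R, ∀ k : ZMod d,
        Real.sqrt (y r k + ε) ≤ (K + 1) * Real.sqrt ε := by
      intro r hr k
      rw [hK1]
      exact Real.sqrt_le_sqrt (hsup r hr k)
    have hlb : ∑ r ∈ R, ∑ k : ZMod d,
        (-(4 * (|Real.sqrt (Complex.normSq (Qform d r k z v) + ε)
              - Real.sqrt (y r k + ε)| * ‖Qform d r k u h‖))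
          - 2 * K * ‖Qform d r k u v + Qform d r k z h‖ ^ 2)
        ≤ ∑ r ∈ R, ∑ k : ZMod d,
          Dval (Qform d r k z v) (Qform d r k u v + Qform d r k z h) (Qform d r k u h)
            (Real.sqrt (y r k + ε)) ε := by
      refine Finset.sum_le_sum fun r hr => Finset.sum_le_sum fun k _ => ?_
      have := le_Dval (Qform d r k z v) (Qform d r k u v + Qform d r k z h)
        (Qform d r k u h) hε (Real.sqrt_nonneg (y r k + ε)) hK (hmK r hr k)
      calc -(4 * (|Real.sqrt (Complex.normSq (Qform d r k z v) + ε)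
              - Real.sqrt (y r k + ε)| * ‖Qform d r k u h‖))
            - 2 * K * ‖Qform d r k u v + Qform d r k z h‖ ^ 2
          = -(4 * |Real.sqrt (Complex.normSq (Qform d r k z v) + ε)
              - Real.sqrt (y r k + ε)| * ‖Qform d r k u h‖)
            - 2 * K * ‖Qform d r k u v + Qform d r k z h‖ ^ 2 := by ring
        _ ≤ _ := this
    have hsplit2 : ∑ r ∈ R, ∑ k : ZMod d,
        (-(4 * (|Real.sqrt (Complex.normSq (Qform d r k z v) + ε)
              - Real.sqrt (y r k + ε)| * ‖Qform d r k u h‖))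
          - 2 * K * ‖Qform d r k u v + Qform d r k z h‖ ^ 2)
        = -(4 * (∑ r ∈ R, ∑ k : ZMod d,
              |Real.sqrt (Complex.normSq (Qform d r k z v) + ε)
                - Real.sqrt (y r k + ε)| * ‖Qform d r k u h‖))
          - 2 * K * (∑ r ∈ R, ∑ k : ZMod d,
              ‖Qform d r k u v + Qform d r k z h‖ ^ 2) := by
      simp only [Finset.sum_sub_distrib, Finset.sum_neg_distrib, ← Finset.mul_sum]
    rw [hsplit2] at hlb
    have hmul : 4 * Real.sqrt (loss d R y ε z v) *
        Real.sqrt (∑ r ∈ R, ∑ k : ZMod d, ‖Qform d r k u h‖ ^ 2)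
        = 4 * (Real.sqrt (loss d R y ε z v) *
          Real.sqrt (∑ r ∈ R, ∑ k : ZMod d, ‖Qform d r k u h‖ ^ 2)) := by ring
    rw [hmul]
    have h4 : -(4 * (Real.sqrt (loss d R y ε z v) *
        Real.sqrt (∑ r ∈ R, ∑ k : ZMod d, ‖Qform d r k u h‖ ^ 2)))
        ≤ -(4 * (∑ r ∈ R, ∑ k : ZMod d,
            |Real.sqrt (Complex.normSq (Qform d r k z v) + ε)
              - Real.sqrt (y r k + ε)| * ‖Qform d r k u h‖)) := by
      linarith
    linarith


end Ptycho
end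
end

section
/- Descent lemma for the regularized loss J: let ε, α_T, β_T ≥ 0. For all z, v, u, h ∈ ℂ^d, J(z+u, v+h) ≤ J(z, v) + 2·Re(u* ∇_z J(z,v)) + 2·Re(h* ∇_v J(z,v)) + ‖u‖₂²·[α_T + d·((10/3)‖v‖₂² + (5/4)‖h‖₂² + (2/3)‖z‖₂² + (1/4)‖u‖₂² + ‖y/d‖₁^{1/2})] + ‖h‖₂²·[β_T + d·((10/3)‖z‖₂² + (5/4)‖u‖₂² + (2/3)‖v‖₂² + (1/4)‖h‖₂² + ‖y/d‖₁^{1/2})]. -/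
open scoped BigOperators Classical
open Finset

noncomputable section

namespace Ptycho

/-! ### Auxiliary lemmas -/

lemma sum_fent_conj (d : ℕ) [NeZero d] (j j' : ZMod d) :
    ∑ k : ZMod d, Fent d k j * (starRingEnd ℂ) (Fent d k j') =
      if j = j' then (d : ℂ) else 0 := by
  have hd : (d : ℕ) ≠ 0 := NeZero.ne d
  have hdc : (d : ℂ) ≠ 0 := by exact_mod_cast hd
  set ω : ℂ := Complex.exp (-(2 * (Real.pi:ℂ) * Complex.I * ((j.val:ℂ) - (j'.val:ℂ))) / d)
    with hω
  have hterm : ∀ k : ZMod d, Fent d k j * (starRingEnd ℂ) (Fent d k j') = ω ^ (k.val) := by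
    intro k
    rw [hω, ← Complex.exp_nat_mul, Fent, Fent, ← Complex.exp_conj, ← Complex.exp_add]
    congr 1
    simp only [map_div₀, map_neg, map_mul, Complex.conj_I, Complex.conj_ofReal, map_natCast,
      map_ofNat]
    field_simp
    ring
  rw [Finset.sum_congr rfl fun k _ => hterm k]
  have hsum : ∑ k : ZMod d, ω ^ (k.val) = ∑ i ∈ Finset.range d, ω ^ i := by
    refine Finset.sum_nbij' (i := fun k => k.val) (j := fun i => (i : ZMod d))
      (fun a _ => Finset.mem_range.2 (ZMod.val_lt a)) (fun a _ => Finset.mem_univ _)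
      (fun a _ => ZMod.natCast_rightInverse a)
      (fun a ha => ZMod.val_cast_of_lt (Finset.mem_range.1 ha)) (fun a _ => rfl)
  rw [hsum]
  by_cases hjj : j = j'
  · subst hjj
    simp [hω]
  · rw [if_neg hjj]
    set m : ℤ := (j.val : ℤ) - (j'.val : ℤ) with hm
    have hmc : ((j.val:ℂ) - (j'.val:ℂ)) = (m : ℂ) := by push_cast [hm]; ring
    have hmne : m ≠ 0 := by
      intro hc
      apply hjj
      have : j.val = j'.val := by omega
      exact ZMod.val_injective d this
    have hωd : ω ^ d = 1 := by
      rw [hω, ← Complex.exp_nat_mul, hmc]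
      have : (d:ℂ) * (-(2 * (Real.pi:ℂ) * Complex.I * (m:ℂ)) / d) =
          (-m : ℤ) * (2 * (Real.pi:ℂ) * Complex.I) := by
        push_cast; field_simp
      rw [this, Complex.exp_int_mul_two_pi_mul_I]
    have hωne : ω ≠ 1 := by
      rw [hω, hmc]
      intro hc
      obtain ⟨n, hn⟩ := Complex.exp_eq_one_iff.1 hc
      have hπ : (Real.pi : ℂ) ≠ 0 := by exact_mod_cast Real.pi_ne_zero
      field_simp at hn
      have h2 : (2*(Real.pi:ℂ)*Complex.I) ≠ 0 := by
        simp [Real.pi_ne_zero, Complex.I_ne_zero]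
      have h3 : (2*(Real.pi:ℂ)*Complex.I) * (-(m:ℂ)) =
          (2*(Real.pi:ℂ)*Complex.I) * ((n:ℂ)*d) := by linear_combination (2*(Real.pi:ℂ)*Complex.I) * hn
      have h4 : (-(m:ℂ)) = (n:ℂ)*d := mul_left_cancel₀ h2 h3
      have h5 : -m = n * (d:ℤ) := by exact_mod_cast h4
      have hdvd : (d:ℤ) ∣ m := ⟨-n, by linear_combination -h5⟩
      have habs : |m| < (d:ℤ) := by
        have := ZMod.val_lt j; have := ZMod.val_lt j'
        rw [abs_lt]; constructor <;> [omega; omega]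
      exact hmne (Int.eq_zero_of_abs_lt_dvd hdvd habs)
    rw [geom_sum_eq hωne, hωd]
    simp

lemma parseval (d : ℕ) [NeZero d] (r : ZMod d) (a b : ZMod d → ℂ) :
    ∑ k : ZMod d, ‖Qform d r k a b‖ ^ 2
      = d * ∑ j : ZMod d, ‖a j‖ ^ 2 * ‖b (j - r)‖ ^ 2 := by
  have key : ∑ k : ZMod d, (Qform d r k a b * (starRingEnd ℂ) (Qform d r k a b))
      = (d : ℂ) * ∑ j : ZMod d,
          ((a j * b (j-r)) * (starRingEnd ℂ) (a j * b (j-r))) := by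
    have h1 : ∀ k, Qform d r k a b = ∑ j : ZMod d, (a j * b (j - r)) * Fent d k j := by
      intro k; unfold Qform; apply Finset.sum_congr rfl; intros; ring
    calc ∑ k : ZMod d, (Qform d r k a b * (starRingEnd ℂ) (Qform d r k a b))
        = ∑ k : ZMod d, ∑ j : ZMod d, ∑ j' : ZMod d,
            ((a j * b (j-r)) * (starRingEnd ℂ) (a j' * b (j'-r))) *
              (Fent d k j * (starRingEnd ℂ) (Fent d k j')) := by
          apply Finset.sum_congr rfl; intro k _
          rw [h1, map_sum, Finset.sum_mul_sum]
          apply Finset.sum_congr rfl; intro j _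
          apply Finset.sum_congr rfl; intro j' _
          simp only [map_mul]; ring
      _ = ∑ j : ZMod d, ∑ j' : ZMod d,
            ((a j * b (j-r)) * (starRingEnd ℂ) (a j' * b (j'-r))) *
              (∑ k : ZMod d, Fent d k j * (starRingEnd ℂ) (Fent d k j')) := by
          rw [Finset.sum_comm]
          apply Finset.sum_congr rfl; intro j _
          rw [Finset.sum_comm]
          apply Finset.sum_congr rfl; intro j' _
          rw [Finset.mul_sum]
      _ = (d : ℂ) * ∑ j : ZMod d,
            ((a j * b (j-r)) * (starRingEnd ℂ) (a j * b (j-r))) := by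
          rw [Finset.mul_sum]
          apply Finset.sum_congr rfl; intro j _
          rw [Finset.sum_congr rfl fun j' _ => by rw [sum_fent_conj]]
          simp only [mul_ite, mul_zero]
          rw [Finset.sum_ite_eq Finset.univ j]
          simp [mul_comm]
  simp only [Complex.mul_conj] at key
  have goal' : ∑ k : ZMod d, (Complex.normSq (Qform d r k a b) : ℝ)
      = d * ∑ j : ZMod d, (Complex.normSq (a j * b (j-r)) : ℝ) := by
    exact_mod_cast key
  simp only [Complex.sq_norm, Complex.normSq_mul] at goal' ⊢
  exact goal'

lemma sum_S_le (d : ℕ) [NeZero d] (R : Finset (ZMod d)) (a b : ZMod d → ℂ) :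
    ∑ r ∈ R, ∑ k : ZMod d, ‖Qform d r k a b‖ ^ 2
      ≤ (d : ℝ) * (nsq d a * nsq d b) := by
  have h1 : ∑ r ∈ R, ∑ k : ZMod d, ‖Qform d r k a b‖ ^ 2
      = (d:ℝ) * ∑ r ∈ R, ∑ j : ZMod d,
          ‖a j‖ ^ 2 * ‖b (j - r)‖ ^ 2 := by
    rw [Finset.mul_sum]
    exact Finset.sum_congr rfl fun r _ => parseval d r a b
  rw [h1]
  apply mul_le_mul_of_nonneg_left _ (by positivity)
  calc ∑ r ∈ R, ∑ j : ZMod d, ‖a j‖ ^ 2 * ‖b (j - r)‖ ^ 2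
      ≤ ∑ r : ZMod d, ∑ j : ZMod d, ‖a j‖ ^ 2 * ‖b (j - r)‖ ^ 2 :=
        Finset.sum_le_sum_of_subset_of_nonneg (Finset.subset_univ R)
          (fun _ _ _ => by positivity)
    _ = nsq d a * nsq d b := by
        rw [Finset.sum_comm]
        unfold nsq
        rw [Finset.sum_mul]
        apply Finset.sum_congr rfl; intro j _
        have hb : ∑ r : ZMod d, ‖b (j - r)‖ ^ 2
            = ∑ x : ZMod d, ‖b x‖ ^ 2 :=
          Fintype.sum_bijective (fun r : ZMod d => j - r) (Equiv.subLeft j).bijective _ _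
            (fun r => rfl)
        rw [← Finset.mul_sum, hb]

lemma pointwise_real (ε y m n ω ω1 ω2 A B s sy se R1 R2 : ℝ)
    (hε : 0 ≤ ε) (hy : 0 ≤ y)
    (hm0 : 0 ≤ m) (hn0 : 0 ≤ n) (hω0 : 0 ≤ ω) (hω10 : 0 ≤ ω1) (hω20 : 0 ≤ ω2)
    (hA2 : A ^ 2 = m ^ 2 + ε) (hB2 : B ^ 2 = n ^ 2 + ε) (hs2 : s ^ 2 = y + ε)
    (hsy2 : sy ^ 2 = y) (hse2 : se ^ 2 = ε)
    (hA0 : 0 ≤ A) (hB0 : 0 ≤ B) (hs0 : 0 ≤ s) (hsy0 : 0 ≤ sy) (hse0 : 0 ≤ se)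
    (hb : n ^ 2 = m ^ 2 + ω ^ 2 + 2 * (R1 + R2))
    (hR1abs : |R1| ≤ ω1 * m) (hR2abs : |R2| ≤ ω2 * m)
    (hnm : (n - m) ^ 2 ≤ ω ^ 2) :
    (B - s) ^ 2 - (A - s) ^ 2 - 2 * ((1 - s / A) * R1)
      ≤ ω ^ 2 + 2 * ω2 * (m + sy) := by
  have hR2u : R2 ≤ ω2 * m := (abs_le.1 hR2abs).2
  have hR2l : -(ω2 * m) ≤ R2 := (abs_le.1 hR2abs).1
  have hmA : m ≤ A :=
    le_of_pow_le_pow_left₀ two_ne_zero hA0 (by rw [hA2]; linarith)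
  have hnB : n ≤ B :=
    le_of_pow_le_pow_left₀ two_ne_zero hB0 (by rw [hB2]; linarith)
  have hseA : se ≤ A :=
    le_of_pow_le_pow_left₀ two_ne_zero hA0
      (by rw [hA2]; have := sq_nonneg m; linarith)
  have hses : se ≤ s :=
    le_of_pow_le_pow_left₀ two_ne_zero hs0 (by rw [hs2]; linarith)
  have hAmse : A ≤ m + se :=
    le_of_pow_le_pow_left₀ two_ne_zero (by positivity)
      (by rw [hA2]; have h := mul_nonneg hm0 hse0; ring_nf; ring_nf at hse2; linarith)
  have hssyse : s ≤ sy + se :=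
    le_of_pow_le_pow_left₀ two_ne_zero (by positivity)
      (by rw [hs2]; have h := mul_nonneg hsy0 hse0; ring_nf; ring_nf at hse2 hsy2; linarith)
  rcases eq_or_lt_of_le hA0 with hAz | hApos
  · -- A = 0 : then ε = 0 and m = 0
    have hA0' : A = 0 := hAz.symm
    have hA20 : (0:ℝ) = m ^ 2 + ε := by rw [← hA2, hA0']; ring
    have hεz : ε = 0 := by have := sq_nonneg m; linarith
    have hmz : m = 0 := by
      have h1 : m ^ 2 = 0 := by linarith
      exact pow_eq_zero_iff two_ne_zero |>.1 h1
    have hR1z : R1 = 0 := by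
      rw [hmz, mul_zero] at hR1abs
      have h := abs_le.1 hR1abs; linarith [h.1, h.2]
    have hR2z : R2 = 0 := by
      rw [hmz, mul_zero] at hR2abs
      have h := abs_le.1 hR2abs; linarith [h.1, h.2]
    have hBω : B ^ 2 = ω ^ 2 := by rw [hB2, hεz, hb, hmz, hR1z, hR2z]; ring
    have hsys : s ^ 2 = sy ^ 2 := by rw [hs2, hsy2, hεz]; ring
    have hsys' : s = sy :=
      le_antisymm (le_of_pow_le_pow_left₀ two_ne_zero hsy0 (le_of_eq hsys))
        (le_of_pow_le_pow_left₀ two_ne_zero hs0 (le_of_eq hsys.symm))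
    rw [hR1z, hA0', hmz]
    have h1 := mul_nonneg hs0 hB0
    have h2 := mul_nonneg hω20 hsy0
    simp only [mul_zero, sub_zero]
    linarith [hBω, h1, h2]
  · -- A > 0
    set t : ℝ := s / A with ht
    have htA : t * A = s := div_mul_cancel₀ s (ne_of_gt hApos)
    have e2 : B ^ 2 - A ^ 2 = 2 * R1 + 2 * R2 + ω ^ 2 := by
      rw [hA2, hB2, hb]; ring
    have hBA : (B - A) ^ 2 ≤ ω ^ 2 := by
      have e1 : (B - A) * (B + A) = (n - m) * (n + m) := by
        linear_combination hB2 - hA2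
      have h3 : (n + m) ^ 2 ≤ (B + A) ^ 2 :=
        pow_le_pow_left₀ (by positivity) (by linarith) 2
      have h5 : (B - A) ^ 2 * (B + A) ^ 2 ≤ ω ^ 2 * (B + A) ^ 2 := by
        calc (B - A) ^ 2 * (B + A) ^ 2 = ((B - A) * (B + A)) ^ 2 := by ring
          _ = ((n - m) * (n + m)) ^ 2 := by rw [e1]
          _ = (n - m) ^ 2 * (n + m) ^ 2 := by ring
          _ ≤ ω ^ 2 * (n + m) ^ 2 := mul_le_mul_of_nonneg_right hnm (sq_nonneg _)
          _ ≤ ω ^ 2 * (B + A) ^ 2 := mul_le_mul_of_nonneg_left h3 (sq_nonneg _)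
      have hpos : 0 < (B + A) ^ 2 := by positivity
      exact le_of_mul_le_mul_right h5 hpos
    have hAs1 : A - s ≤ m + sy := by linarith
    have hAs2 : -(m + sy) ≤ A - s := by linarith
    have hgoal2 : 2 * R2 * A - 2 * s * A * (B - A) + 2 * s * R1 ≤
        2 * ω2 * (m + sy) * A := by
      have key : 2 * R2 * A - 2 * s * A * (B - A) + 2 * s * R1
          = 2 * R2 * (A - s) + s * ((B - A) ^ 2 - ω ^ 2) := by
        linear_combination (-s) * e2
      rw [key]
      have h1 : 2 * R2 * (A - s) ≤ 2 * (ω2 * m) * (m + sy) := by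
        have p1 := mul_nonneg (sub_nonneg.2 hR2u)
          (by linarith : (0:ℝ) ≤ (m + sy) + (A - s))
        have p2 := mul_nonneg (by linarith [hR2l] : (0:ℝ) ≤ ω2 * m + R2)
          (by linarith : (0:ℝ) ≤ (m + sy) - (A - s))
        linarith [p1, p2]
      have h2 : s * ((B - A) ^ 2 - ω ^ 2) ≤ 0 :=
        mul_nonpos_of_nonneg_of_nonpos hs0 (by linarith)
      have h3 : 2 * (ω2 * m) * (m + sy) ≤ 2 * ω2 * (m + sy) * A := by
        have p := mul_nonneg (mul_nonneg hω20 (add_nonneg hm0 hsy0))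
          (sub_nonneg.2 hmA)
        linarith [p]
      linarith
    have final : 2 * R2 + 2 * t * R1 - 2 * s * (B - A) ≤ 2 * ω2 * (m + sy) := by
      have hmul : (2 * R2 + 2 * t * R1 - 2 * s * (B - A)) * A
          = 2 * R2 * A - 2 * s * A * (B - A) + 2 * s * R1 := by
        linear_combination (2 * R1) * htA
      exact le_of_mul_le_mul_right (by rw [hmul]; exact hgoal2) hApos
    have e1 : (B - s) ^ 2 - (A - s) ^ 2 = B ^ 2 - A ^ 2 - 2 * s * (B - A) := by ring
    linarith [final, e1, e2]

lemma pointwise (ε y : ℝ) (hε : 0 ≤ ε) (hy : 0 ≤ y) (c w1 w2 : ℂ) :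
    (Real.sqrt (‖c + (w1 + w2)‖ ^ 2 + ε) - Real.sqrt (y + ε)) ^ 2
      - (Real.sqrt (‖c‖ ^ 2 + ε) - Real.sqrt (y + ε)) ^ 2
      - 2 * (coef ε y c * (((starRingEnd ℂ) w1) * c).re)
    ≤ ‖w1 + w2‖ ^ 2
      + 2 * ‖w2‖ * (‖c‖ + Real.sqrt y) := by
  have hb : (‖c + (w1 + w2)‖) ^ 2 = (‖c‖) ^ 2
      + (‖w1 + w2‖) ^ 2
      + 2 * ((((starRingEnd ℂ) w1) * c).re + (((starRingEnd ℂ) w2) * c).re) := by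
    have h1 : (((starRingEnd ℂ) (w1 + w2)) * c).re
        = (((starRingEnd ℂ) w1) * c).re + (((starRingEnd ℂ) w2) * c).re := by
      rw [map_add, add_mul, Complex.add_re]
    rw [← h1]
    simp only [Complex.sq_norm]
    rw [Complex.normSq_add, mul_comm ((starRingEnd ℂ) (w1 + w2)) c]
  have hR1abs : |(((starRingEnd ℂ) w1) * c).re| ≤ ‖w1‖ * ‖c‖ := by
    have h := Complex.abs_re_le_norm (((starRingEnd ℂ) w1) * c)
    rwa [norm_mul, Complex.norm_conj] at h
  have hR2abs : |(((starRingEnd ℂ) w2) * c).re| ≤ ‖w2‖ * ‖c‖ := by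
    have h := Complex.abs_re_le_norm (((starRingEnd ℂ) w2) * c)
    rwa [norm_mul, Complex.norm_conj] at h
  have hnm : (‖c + (w1 + w2)‖ - ‖c‖) ^ 2
      ≤ (‖w1 + w2‖) ^ 2 := by
    have h := abs_norm_sub_norm_le (c + (w1 + w2)) c
    rw [add_sub_cancel_left] at h
    have h2 := abs_le.1 h
    nlinarith [h2.1, h2.2]
  have hcoef : coef ε y c
      = 1 - Real.sqrt (y + ε) / Real.sqrt (‖c‖ ^ 2 + ε) := rfl
  rw [hcoef]
  exact pointwise_real ε y (‖c‖) (‖c + (w1 + w2)‖)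
    (‖w1 + w2‖) (‖w1‖) (‖w2‖)
    (Real.sqrt (‖c‖ ^ 2 + ε)) (Real.sqrt (‖c + (w1 + w2)‖ ^ 2 + ε))
    (Real.sqrt (y + ε)) (Real.sqrt y) (Real.sqrt ε)
    (((starRingEnd ℂ) w1) * c).re (((starRingEnd ℂ) w2) * c).re
    hε hy (norm_nonneg _) (norm_nonneg _) (norm_nonneg _)
    (norm_nonneg _) (norm_nonneg _)
    (Real.sq_sqrt (by positivity)) (Real.sq_sqrt (by positivity))
    (Real.sq_sqrt (by linarith)) (Real.sq_sqrt hy) (Real.sq_sqrt hε)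
    (Real.sqrt_nonneg _) (Real.sqrt_nonneg _) (Real.sqrt_nonneg _) (Real.sqrt_nonneg _)
    (Real.sqrt_nonneg _) hb hR1abs hR2abs hnm

lemma Qform_add_add (d : ℕ) [NeZero d] (r k : ZMod d) (z v u h : ZMod d → ℂ) :
    Qform d r k (fun j => z j + u j) (fun j => v j + h j)
      = Qform d r k z v +
        ((Qform d r k u v + Qform d r k z h) + Qform d r k u h) := by
  unfold Qform
  rw [← Finset.sum_add_distrib, ← Finset.sum_add_distrib, ← Finset.sum_add_distrib]
  apply Finset.sum_congr rfl; intros; ring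

lemma nsq_add' (d : ℕ) [NeZero d] (z u : ZMod d → ℂ) :
    nsq d (fun j => z j + u j)
      = nsq d z + nsq d u + 2 * ∑ j : ZMod d, ((starRingEnd ℂ) (u j) * z j).re := by
  unfold nsq
  rw [Finset.mul_sum, ← Finset.sum_add_distrib, ← Finset.sum_add_distrib]
  apply Finset.sum_congr rfl; intro j _
  simp only [Complex.sq_norm]
  rw [Complex.normSq_add, mul_comm ((starRingEnd ℂ) (u j)) (z j)]

lemma sum_conj_gradZr (d : ℕ) [NeZero d] (y : ZMod d → ZMod d → ℝ) (ε : ℝ) (r : ZMod d)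
    (z v u : ZMod d → ℂ) :
    (∑ j : ZMod d, (starRingEnd ℂ) (u j) * gradZr d y ε r z v j).re
      = ∑ k : ZMod d, coef ε (y r k) (Qform d r k z v) *
          ((starRingEnd ℂ) (Qform d r k u v) * Qform d r k z v).re := by
  unfold gradZr
  have h1 : ∑ j : ZMod d, (starRingEnd ℂ) (u j) *
      (∑ k : ZMod d, (coef ε (y r k) (Qform d r k z v) : ℂ) * Qform d r k z v *
        (starRingEnd ℂ) (Fent d k j * v (j - r)))
      = ∑ k : ZMod d, (coef ε (y r k) (Qform d r k z v) : ℂ) *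
          ((starRingEnd ℂ) (Qform d r k u v) * Qform d r k z v) := by
    simp only [Finset.mul_sum]
    rw [Finset.sum_comm]
    apply Finset.sum_congr rfl; intro k _
    have hq : Qform d r k u v = ∑ j : ZMod d, u j * Fent d k j * v (j - r) := rfl
    rw [hq, map_sum, Finset.sum_mul, Finset.mul_sum]
    apply Finset.sum_congr rfl; intro j _
    simp only [map_mul]
    ring
  rw [h1, Complex.re_sum]
  apply Finset.sum_congr rfl; intro k _
  rw [Complex.re_ofReal_mul]

lemma sum_conj_gradVr (d : ℕ) [NeZero d] (y : ZMod d → ZMod d → ℝ) (ε : ℝ) (r : ZMod d)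
    (z v h : ZMod d → ℂ) :
    (∑ j : ZMod d, (starRingEnd ℂ) (h j) * gradVr d y ε r z v j).re
      = ∑ k : ZMod d, coef ε (y r k) (Qform d r k z v) *
          ((starRingEnd ℂ) (Qform d r k z h) * Qform d r k z v).re := by
  unfold gradVr
  have h1 : ∑ j : ZMod d, (starRingEnd ℂ) (h j) *
      (∑ k : ZMod d, (coef ε (y r k) (Qform d r k z v) : ℂ) * Qform d r k z v *
        (starRingEnd ℂ) (Fent d k (j + r) * z (j + r)))
      = ∑ k : ZMod d, (coef ε (y r k) (Qform d r k z v) : ℂ) *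
          ((starRingEnd ℂ) (Qform d r k z h) * Qform d r k z v) := by
    simp only [Finset.mul_sum]
    rw [Finset.sum_comm]
    apply Finset.sum_congr rfl; intro k _
    have h2 : Qform d r k z h = ∑ j : ZMod d, z (j + r) * Fent d k (j + r) * h j := by
      rw [Qform]
      apply Fintype.sum_bijective (fun j : ZMod d => j - r)
        (Equiv.subRight r).bijective
      intro j
      simp [sub_add_cancel]
    rw [h2, map_sum, Finset.sum_mul, Finset.mul_sum]
    apply Finset.sum_congr rfl; intro j _
    simp only [map_mul]
    ring
  rw [h1, Complex.re_sum]
  apply Finset.sum_congr rfl; intro k _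
  rw [Complex.re_ofReal_mul]

lemma abs_add_three_sq (x1 x2 x3 : ℂ) :
    ‖x1 + x2 + x3‖ ^ 2
      ≤ 3 * (‖x1‖ ^ 2 + ‖x2‖ ^ 2 + ‖x3‖ ^ 2) := by
  have h1 : ‖x1 + x2 + x3‖
      ≤ ‖x1‖ + ‖x2‖ + ‖x3‖ := by
    calc ‖x1 + x2 + x3‖ ≤ ‖x1 + x2‖ + ‖x3‖ :=
          norm_add_le _ _
      _ ≤ ‖x1‖ + ‖x2‖ + ‖x3‖ := by
          linarith [norm_add_le x1 x2]
  nlinarith [h1, norm_nonneg (x1 + x2 + x3), norm_nonneg x1,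
    norm_nonneg x2, norm_nonneg x3,
    sq_nonneg (‖x1‖ - ‖x2‖),
    sq_nonneg (‖x2‖ - ‖x3‖),
    sq_nonneg (‖x1‖ - ‖x3‖)]

lemma half_bound (X P Q : ℝ) (hX : 0 ≤ X) (hP : 0 ≤ P) (hQ : 0 ≤ Q)
    (h2 : X ^ 2 ≤ P * Q) : X ≤ (P + Q) / 2 := by
  nlinarith [sq_nonneg (P - Q), sq_nonneg (X - (P + Q) / 2)]

/-- **Descent lemma for the regularized loss `J`** (Lemma 2.2 of the paper). -/
theorem descent_lemma_J (d : ℕ) [NeZero d] (R : Finset (ZMod d)) (hR : R.Nonempty)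
    (y : ZMod d → ZMod d → ℝ) (hy : ∀ r ∈ R, ∀ k : ZMod d, 0 ≤ y r k)
    (ε αT βT : ℝ) (hε : 0 ≤ ε) (hαT : 0 ≤ αT) (hβT : 0 ≤ βT)
    (z v u h : ZMod d → ℂ) :
    Jfun d R y ε αT βT (fun j => z j + u j) (fun j => v j + h j)
      ≤ Jfun d R y ε αT βT z v
        + 2 * reInner d u (gradZJ d R y ε αT z v)
        + 2 * reInner d h (gradVJ d R y ε βT z v)
        + nsq d u * (αT + d * ((10 / 3) * nsq d v + (5 / 4) * nsq d h
            + (2 / 3) * nsq d z + (1 / 4) * nsq d u + Real.sqrt (yd1 d R y)))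
        + nsq d h * (βT + d * ((10 / 3) * nsq d z + (5 / 4) * nsq d u
            + (2 / 3) * nsq d v + (1 / 4) * nsq d h + Real.sqrt (yd1 d R y))) := by
  classical
  have hD0 : (0:ℝ) ≤ (d:ℝ) := Nat.cast_nonneg d
  have hDne : (d:ℝ) ≠ 0 := Nat.cast_ne_zero.2 (NeZero.ne d)
  -- step 1: pointwise descent estimate, summed
  have hsum1 : loss d R y ε (fun j => z j + u j) (fun j => v j + h j)
      ≤ ∑ r ∈ R, ∑ k : ZMod d,
          ((Real.sqrt (‖Qform d r k z v‖ ^ 2 + ε)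
              - Real.sqrt (y r k + ε)) ^ 2
            + 2 * (coef ε (y r k) (Qform d r k z v) *
                ((starRingEnd ℂ) (Qform d r k u v) * Qform d r k z v).re)
            + 2 * (coef ε (y r k) (Qform d r k z v) *
                ((starRingEnd ℂ) (Qform d r k z h) * Qform d r k z v).re)
            + ‖(Qform d r k u v + Qform d r k z h) + Qform d r k u h‖ ^ 2
            + 2 * (‖Qform d r k u h‖ * ‖Qform d r k z v‖)
            + 2 * (‖Qform d r k u h‖ * Real.sqrt (y r k))) := by
    unfold loss lossR
    apply Finset.sum_le_sum; intro r hr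
    apply Finset.sum_le_sum; intro k _
    rw [Qform_add_add d r k z v u h]
    have hpt := pointwise ε (y r k) hε (hy r hr k) (Qform d r k z v)
      (Qform d r k u v + Qform d r k z h) (Qform d r k u h)
    have hsplitre : ((starRingEnd ℂ) (Qform d r k u v + Qform d r k z h)
          * Qform d r k z v).re
        = ((starRingEnd ℂ) (Qform d r k u v) * Qform d r k z v).re
          + ((starRingEnd ℂ) (Qform d r k z h) * Qform d r k z v).re := by
      rw [map_add, add_mul, Complex.add_re]
    rw [hsplitre] at hpt
    linarith [hpt]
  -- named sums
  set LINp : ℝ := ∑ r ∈ R, ∑ k : ZMod d, coef ε (y r k) (Qform d r k z v) *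
      ((starRingEnd ℂ) (Qform d r k u v) * Qform d r k z v).re with hLINp
  set LINq : ℝ := ∑ r ∈ R, ∑ k : ZMod d, coef ε (y r k) (Qform d r k z v) *
      ((starRingEnd ℂ) (Qform d r k z h) * Qform d r k z v).re with hLINq
  set SIG1 : ℝ := ∑ r ∈ R, ∑ k : ZMod d,
      ‖(Qform d r k u v + Qform d r k z h) + Qform d r k u h‖ ^ 2 with hSIG1
  set X : ℝ := ∑ r ∈ R, ∑ k : ZMod d,
      ‖Qform d r k u h‖ * ‖Qform d r k z v‖ with hX
  set Yv : ℝ := ∑ r ∈ R, ∑ k : ZMod d,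
      ‖Qform d r k u h‖ * Real.sqrt (y r k) with hYv
  have hloss : loss d R y ε (fun j => z j + u j) (fun j => v j + h j)
      ≤ loss d R y ε z v + 2 * LINp + 2 * LINq + SIG1 + 2 * X + 2 * Yv := by
    refine le_trans hsum1 (le_of_eq ?_)
    rw [hLINp, hLINq, hSIG1, hX, hYv]
    unfold loss lossR
    simp only [Finset.sum_add_distrib, Finset.mul_sum]
  -- quadratic sums
  have hSuv : ∑ r ∈ R, ∑ k : ZMod d, ‖Qform d r k u v‖ ^ 2
      ≤ (d:ℝ) * (nsq d u * nsq d v) := sum_S_le d R u v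
  have hSzh : ∑ r ∈ R, ∑ k : ZMod d, ‖Qform d r k z h‖ ^ 2
      ≤ (d:ℝ) * (nsq d z * nsq d h) := sum_S_le d R z h
  have hSuh : ∑ r ∈ R, ∑ k : ZMod d, ‖Qform d r k u h‖ ^ 2
      ≤ (d:ℝ) * (nsq d u * nsq d h) := sum_S_le d R u h
  have hSzv : ∑ r ∈ R, ∑ k : ZMod d, ‖Qform d r k z v‖ ^ 2
      ≤ (d:ℝ) * (nsq d z * nsq d v) := sum_S_le d R z v
  have hSuh0 : (0:ℝ) ≤ ∑ r ∈ R, ∑ k : ZMod d, ‖Qform d r k u h‖ ^ 2 :=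
    Finset.sum_nonneg fun r _ => Finset.sum_nonneg fun k _ => by positivity
  have hSzv0 : (0:ℝ) ≤ ∑ r ∈ R, ∑ k : ZMod d, ‖Qform d r k z v‖ ^ 2 :=
    Finset.sum_nonneg fun r _ => Finset.sum_nonneg fun k _ => by positivity
  have hN0 : 0 ≤ nsq d u ∧ 0 ≤ nsq d v ∧ 0 ≤ nsq d z ∧ 0 ≤ nsq d h := by
    refine ⟨?_, ?_, ?_, ?_⟩ <;>
      exact Finset.sum_nonneg fun j _ => by positivity
  obtain ⟨hNu0, hNv0, hNz0, hNh0⟩ := hN0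
  -- SIG1 bound
  have hS1 : SIG1 ≤ 3 * ((d:ℝ) * (nsq d u * nsq d v)) + 3 * ((d:ℝ) * (nsq d z * nsq d h))
      + 3 * ((d:ℝ) * (nsq d u * nsq d h)) := by
    have h31 : SIG1 ≤ ∑ r ∈ R, ∑ k : ZMod d,
        (3 * (‖Qform d r k u v‖ ^ 2 + ‖Qform d r k z h‖ ^ 2
          + ‖Qform d r k u h‖ ^ 2)) := by
      rw [hSIG1]
      apply Finset.sum_le_sum; intro r _
      apply Finset.sum_le_sum; intro k _
      exact abs_add_three_sq _ _ _
    have h32 : ∑ r ∈ R, ∑ k : ZMod d,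
        (3 * (‖Qform d r k u v‖ ^ 2 + ‖Qform d r k z h‖ ^ 2
          + ‖Qform d r k u h‖ ^ 2))
        = 3 * (∑ r ∈ R, ∑ k : ZMod d, ‖Qform d r k u v‖ ^ 2)
          + 3 * (∑ r ∈ R, ∑ k : ZMod d, ‖Qform d r k z h‖ ^ 2)
          + 3 * (∑ r ∈ R, ∑ k : ZMod d, ‖Qform d r k u h‖ ^ 2) := by
      simp only [mul_add, Finset.sum_add_distrib, Finset.mul_sum]
    rw [h32] at h31
    linarith [h31, hSuv, hSzh, hSuh]
  -- Cauchy–Schwarz for X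
  have hX0 : 0 ≤ X := by
    rw [hX]
    exact Finset.sum_nonneg fun r _ => Finset.sum_nonneg fun k _ => by positivity
  have hXsq : X ^ 2 ≤ (∑ r ∈ R, ∑ k : ZMod d, ‖Qform d r k u h‖ ^ 2)
      * (∑ r ∈ R, ∑ k : ZMod d, ‖Qform d r k z v‖ ^ 2) := by
    have hcs := Finset.sum_mul_sq_le_sq_mul_sq (R ×ˢ (Finset.univ : Finset (ZMod d)))
      (fun pr => ‖Qform d pr.1 pr.2 u h‖)
      (fun pr => ‖Qform d pr.1 pr.2 z v‖)
    rw [hX]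
    simpa [Finset.sum_product] using hcs
  have hXb1 : X ≤ ((d:ℝ) * (nsq d u * nsq d v) + (d:ℝ) * (nsq d z * nsq d h)) / 2 := by
    apply half_bound _ _ _ hX0 (by positivity) (by positivity)
    calc X ^ 2 ≤ (∑ r ∈ R, ∑ k : ZMod d, ‖Qform d r k u h‖ ^ 2)
        * (∑ r ∈ R, ∑ k : ZMod d, ‖Qform d r k z v‖ ^ 2) := hXsq
      _ ≤ ((d:ℝ) * (nsq d u * nsq d h)) * ((d:ℝ) * (nsq d z * nsq d v)) :=
          mul_le_mul hSuh hSzv hSzv0 (by positivity)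
      _ = ((d:ℝ) * (nsq d u * nsq d v)) * ((d:ℝ) * (nsq d z * nsq d h)) := by ring
  have hXb2 : X ≤ ((d:ℝ) * (nsq d u * nsq d z) + (d:ℝ) * (nsq d v * nsq d h)) / 2 := by
    apply half_bound _ _ _ hX0 (by positivity) (by positivity)
    calc X ^ 2 ≤ (∑ r ∈ R, ∑ k : ZMod d, ‖Qform d r k u h‖ ^ 2)
        * (∑ r ∈ R, ∑ k : ZMod d, ‖Qform d r k z v‖ ^ 2) := hXsq
      _ ≤ ((d:ℝ) * (nsq d u * nsq d h)) * ((d:ℝ) * (nsq d z * nsq d v)) :=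
          mul_le_mul hSuh hSzv hSzv0 (by positivity)
      _ = ((d:ℝ) * (nsq d u * nsq d z)) * ((d:ℝ) * (nsq d v * nsq d h)) := by ring
  -- Cauchy–Schwarz for Yv
  have hsumy0 : (0:ℝ) ≤ ∑ r ∈ R, ∑ k : ZMod d, y r k :=
    Finset.sum_nonneg fun r hr => Finset.sum_nonneg fun k _ => hy r hr k
  have hyd10 : 0 ≤ yd1 d R y := by
    unfold yd1; exact div_nonneg hsumy0 hD0
  have hYd2 : Real.sqrt (yd1 d R y) ^ 2 = yd1 d R y := Real.sq_sqrt hyd10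
  have hsumy : ∑ r ∈ R, ∑ k : ZMod d, y r k = yd1 d R y * (d:ℝ) := by
    unfold yd1; field_simp
  have hY0 : 0 ≤ Yv := by
    rw [hYv]
    exact Finset.sum_nonneg fun r _ => Finset.sum_nonneg fun k _ =>
      mul_nonneg (by positivity) (Real.sqrt_nonneg _)
  have hYsq : Yv ^ 2 ≤ (∑ r ∈ R, ∑ k : ZMod d, y r k)
      * (∑ r ∈ R, ∑ k : ZMod d, ‖Qform d r k u h‖ ^ 2) := by
    have hcs := Finset.sum_mul_sq_le_sq_mul_sq (R ×ˢ (Finset.univ : Finset (ZMod d)))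
      (fun pr => Real.sqrt (y pr.1 pr.2))
      (fun pr => ‖Qform d pr.1 pr.2 u h‖)
    have hsq : ∑ pr ∈ R ×ˢ (Finset.univ : Finset (ZMod d)), Real.sqrt (y pr.1 pr.2) ^ 2
        = ∑ pr ∈ R ×ˢ (Finset.univ : Finset (ZMod d)), y pr.1 pr.2 :=
      Finset.sum_congr rfl fun pr hpr =>
        Real.sq_sqrt (hy pr.1 (Finset.mem_product.1 hpr).1 pr.2)
    rw [hsq] at hcs
    have hswap : ∑ pr ∈ R ×ˢ (Finset.univ : Finset (ZMod d)),
        Real.sqrt (y pr.1 pr.2) * ‖Qform d pr.1 pr.2 u h‖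
        = Yv := by
      rw [hYv, Finset.sum_product]
      exact Finset.sum_congr rfl fun r _ => Finset.sum_congr rfl fun k _ => mul_comm _ _
    rw [hswap] at hcs
    calc Yv ^ 2 ≤ _ := hcs
      _ = (∑ r ∈ R, ∑ k : ZMod d, y r k)
          * (∑ r ∈ R, ∑ k : ZMod d, ‖Qform d r k u h‖ ^ 2) := by
        rw [Finset.sum_product, Finset.sum_product]
  have hYb : Yv ≤ ((d:ℝ) * Real.sqrt (yd1 d R y) * nsq d u
      + (d:ℝ) * Real.sqrt (yd1 d R y) * nsq d h) / 2 := by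
    apply half_bound _ _ _ hY0 (by positivity) (by positivity)
    calc Yv ^ 2 ≤ (∑ r ∈ R, ∑ k : ZMod d, y r k)
        * (∑ r ∈ R, ∑ k : ZMod d, ‖Qform d r k u h‖ ^ 2) := hYsq
      _ ≤ (yd1 d R y * (d:ℝ)) * ((d:ℝ) * (nsq d u * nsq d h)) := by
          rw [← hsumy]
          exact mul_le_mul_of_nonneg_left hSuh hsumy0
      _ = ((d:ℝ) * Real.sqrt (yd1 d R y) * nsq d u)
          * ((d:ℝ) * Real.sqrt (yd1 d R y) * nsq d h) := by
          linear_combination (-((d:ℝ)^2 * nsq d u * nsq d h)) * hYd2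
  -- gradient identities
  have hGZ : reInner d u (gradZJ d R y ε αT z v)
      = LINp + αT * ∑ j : ZMod d, ((starRingEnd ℂ) (u j) * z j).re := by
    unfold reInner gradZJ
    have h1 : ∑ j : ZMod d, (starRingEnd ℂ) (u j) *
        ((∑ r ∈ R, gradZr d y ε r z v j) + (αT:ℂ) * z j)
        = (∑ r ∈ R, ∑ j : ZMod d, (starRingEnd ℂ) (u j) * gradZr d y ε r z v j)
          + (αT:ℂ) * ∑ j : ZMod d, (starRingEnd ℂ) (u j) * z j := by
      simp only [mul_add, Finset.mul_sum, Finset.sum_add_distrib]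
      rw [Finset.sum_comm]
      congr 1
      apply Finset.sum_congr rfl; intro j _; ring
    rw [h1, Complex.add_re, Complex.re_sum, Complex.re_ofReal_mul, Complex.re_sum, hLINp]
    congr 1
    exact Finset.sum_congr rfl fun r _ => sum_conj_gradZr d y ε r z v u
  have hGV : reInner d h (gradVJ d R y ε βT z v)
      = LINq + βT * ∑ j : ZMod d, ((starRingEnd ℂ) (h j) * v j).re := by
    unfold reInner gradVJ
    have h1 : ∑ j : ZMod d, (starRingEnd ℂ) (h j) *
        ((∑ r ∈ R, gradVr d y ε r z v j) + (βT:ℂ) * v j)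
        = (∑ r ∈ R, ∑ j : ZMod d, (starRingEnd ℂ) (h j) * gradVr d y ε r z v j)
          + (βT:ℂ) * ∑ j : ZMod d, (starRingEnd ℂ) (h j) * v j := by
      simp only [mul_add, Finset.mul_sum, Finset.sum_add_distrib]
      rw [Finset.sum_comm]
      congr 1
      apply Finset.sum_congr rfl; intro j _; ring
    rw [h1, Complex.add_re, Complex.re_sum, Complex.re_ofReal_mul, Complex.re_sum, hLINq]
    congr 1
    exact Finset.sum_congr rfl fun r _ => sum_conj_gradVr d y ε r z v h
  -- regularizers
  have hnsqZ : nsq d (fun j => z j + u j)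
      = nsq d z + nsq d u + 2 * ∑ j : ZMod d, ((starRingEnd ℂ) (u j) * z j).re :=
    nsq_add' d z u
  have hnsqV : nsq d (fun j => v j + h j)
      = nsq d v + nsq d h + 2 * ∑ j : ZMod d, ((starRingEnd ℂ) (h j) * v j).re :=
    nsq_add' d v h
  -- AM-GM for the N_u N_h excess
  have hAM : (d:ℝ) * (nsq d u * nsq d h)
      ≤ (d:ℝ) * ((nsq d u ^ 2 + nsq d h ^ 2) / 2) := by
    apply mul_le_mul_of_nonneg_left _ hD0
    linarith [sq_nonneg (nsq d u - nsq d h)]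
  -- final assembly
  clear_value LINp LINq SIG1 X Yv
  unfold Jfun
  rw [hnsqZ, hnsqV, hGZ, hGV]
  linarith [hloss, hS1, hXb1, hXb2, hYb, hAM, hαT, hβT]

end Ptycho
end
end

section
/- Gradient bound for the single-shift loss: let ε ≥ 0. For every r ∈ R and all z, v ∈ ℂ^d, ‖∇_z L_{r,ε}(z, v)‖₂ ≤ √d · (L_{r,ε}(z,v))^{1/2} · ‖v‖₂ and ‖∇_v L_{r,ε}(z, v)‖₂ ≤ √d · (L_{r,ε}(z,v))^{1/2} · ‖z‖₂. -/
open scoped BigOperators Classical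
open Finset

noncomputable section

namespace Ptycho

lemma abs_Fent (d : ℕ) (k j : ZMod d) : ‖Fent d k j‖ = 1 := by
  rw [Fent]
  have h : -(2 * (Real.pi : ℂ) * Complex.I * (k.val : ℂ) * (j.val : ℂ)) / (d : ℂ)
      = ((-(2 * Real.pi * k.val * j.val) / d : ℝ) : ℂ) * Complex.I := by
    push_cast; ring
  rw [h, Complex.norm_exp_ofReal_mul_I]

lemma coef_abs_le (ε yrk : ℝ) (hε : 0 ≤ ε) (c : ℂ) :
    |coef ε yrk c| * ‖c‖
      ≤ |Real.sqrt (‖c‖ ^ 2 + ε) - Real.sqrt (yrk + ε)| := by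
  set s := Real.sqrt (‖c‖ ^ 2 + ε) with hs
  by_cases h0 : s = 0
  · have hc : ‖c‖ = 0 := by
      have h := Real.sqrt_eq_zero'.mp h0
      nlinarith [norm_nonneg c, sq_nonneg (‖c‖)]
    simp [hc]
  · have hs' : 0 < s := lt_of_le_of_ne (Real.sqrt_nonneg _) (Ne.symm h0)
    have hcle : ‖c‖ ≤ s := by
      rw [hs]
      calc ‖c‖ = Real.sqrt (‖c‖ ^ 2) := by
            rw [Real.sqrt_sq (norm_nonneg c)]
        _ ≤ _ := Real.sqrt_le_sqrt (by linarith)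
    have hcoef : coef ε yrk c = (s - Real.sqrt (yrk + ε)) / s := by
      rw [coef, ← hs]; field_simp
    rw [hcoef, abs_div, abs_of_pos hs', div_mul_eq_mul_div, div_le_iff₀ hs']
    exact mul_le_mul_of_nonneg_left hcle (abs_nonneg _)

lemma nsq_le_of_abs_le (d : ℕ) [NeZero d] (g w : ZMod d → ℂ) (C : ℝ)
    (τ : ZMod d → ZMod d) (hτ : Function.Bijective τ)
    (h : ∀ j, ‖g j‖ ≤ C * ‖w (τ j)‖) :
    nsq d g ≤ C ^ 2 * nsq d w := by
  have key : nsq d g ≤ ∑ j : ZMod d, C ^ 2 * ‖w (τ j)‖ ^ 2 := by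
    apply Finset.sum_le_sum
    intro j _
    calc ‖g j‖ ^ 2 ≤ (C * ‖w (τ j)‖) ^ 2 :=
          pow_le_pow_left₀ (norm_nonneg _) (h j) 2
      _ = C ^ 2 * ‖w (τ j)‖ ^ 2 := by ring
  rw [← Finset.mul_sum] at key
  have : ∑ j : ZMod d, ‖w (τ j)‖ ^ 2 = nsq d w :=
    Fintype.sum_bijective τ hτ _ _ (fun j => rfl)
  rwa [this] at key

lemma grad_pointwise (d : ℕ) [NeZero d] (y : ZMod d → ZMod d → ℝ) (ε : ℝ) (hε : 0 ≤ ε)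
    (r : ZMod d) (z v : ZMod d → ℂ) (w : ZMod d → ℂ) (σ τ : ZMod d → ZMod d) (j : ZMod d) :
    ‖∑ k : ZMod d, (coef ε (y r k) (Qform d r k z v) : ℂ) * Qform d r k z v *
        (starRingEnd ℂ) (Fent d k (τ j) * w (σ j))‖
      ≤ (∑ k : ZMod d, |Real.sqrt (‖Qform d r k z v‖ ^ 2 + ε)
          - Real.sqrt (y r k + ε)|) * ‖w (σ j)‖ := by
  calc ‖_‖ ≤ ∑ k : ZMod d, 
        ‖(coef ε (y r k) (Qform d r k z v) : ℂ) * Qform d r k z v *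
          (starRingEnd ℂ) (Fent d k (τ j) * w (σ j))‖ := norm_sum_le _ _
    _ ≤ ∑ k : ZMod d, |Real.sqrt (‖Qform d r k z v‖ ^ 2 + ε)
          - Real.sqrt (y r k + ε)| * ‖w (σ j)‖ := by
        apply Finset.sum_le_sum
        intro k _
        rw [norm_mul, norm_mul, Complex.norm_conj, norm_mul, abs_Fent, one_mul,
          Complex.norm_real, Real.norm_eq_abs]
        exact mul_le_mul_of_nonneg_right (coef_abs_le _ _ hε _) (norm_nonneg _)
    _ = _ := by rw [← Finset.sum_mul]

lemma nsq_grad_le (d : ℕ) [NeZero d] (y : ZMod d → ZMod d → ℝ) (ε : ℝ) (hε : 0 ≤ ε)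
    (r : ZMod d) (z v : ZMod d → ℂ) (w : ZMod d → ℂ) (g : ZMod d → ℂ)
    (σ τ : ZMod d → ZMod d) (hσ : Function.Bijective σ)
    (hg : ∀ j, g j = ∑ k : ZMod d, (coef ε (y r k) (Qform d r k z v) : ℂ) *
        Qform d r k z v * (starRingEnd ℂ) (Fent d k (τ j) * w (σ j))) :
    nsq d g ≤ d * lossR d y ε r z v * nsq d w := by
  set E : ℝ := ∑ k : ZMod d, |Real.sqrt (‖Qform d r k z v‖ ^ 2 + ε)
    - Real.sqrt (y r k + ε)| with hE
  have h1 : nsq d g ≤ E ^ 2 * nsq d w := by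
    apply nsq_le_of_abs_le d g w E σ hσ
    intro j
    rw [hg j]
    exact grad_pointwise d y ε hε r z v w σ τ j
  have h2 : E ^ 2 ≤ d * lossR d y ε r z v := by
    rw [hE]
    calc (∑ k : ZMod d, |Real.sqrt (‖Qform d r k z v‖ ^ 2 + ε)
          - Real.sqrt (y r k + ε)|) ^ 2
        ≤ (Finset.univ : Finset (ZMod d)).card *
          ∑ k : ZMod d, |Real.sqrt (‖Qform d r k z v‖ ^ 2 + ε)
          - Real.sqrt (y r k + ε)| ^ 2 := sq_sum_le_card_mul_sum_sq
      _ = d * lossR d y ε r z v := by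
          rw [Finset.card_univ, ZMod.card d, lossR]
          congr 1
          apply Finset.sum_congr rfl
          intro k _
          rw [sq_abs]
    -- done
  calc nsq d g ≤ E ^ 2 * nsq d w := h1
    _ ≤ d * lossR d y ε r z v * nsq d w := by
        apply mul_le_mul_of_nonneg_right h2
        exact Finset.sum_nonneg fun j _ => by positivity

/-- **Gradient bound for the single-shift loss:** for every `ε ≥ 0` and `r ∈ R`,
`‖∇_z L_{r,ε}(z,v)‖₂ ≤ √d·√(L_{r,ε}(z,v))·‖v‖₂` and
`‖∇_v L_{r,ε}(z,v)‖₂ ≤ √d·√(L_{r,ε}(z,v))·‖z‖₂`. -/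
theorem single_shift_gradient_bound (d : ℕ) [NeZero d]
    (R : Finset (ZMod d)) (hR : R.Nonempty)
    (y : ZMod d → ZMod d → ℝ) (hy : ∀ r ∈ R, ∀ k : ZMod d, 0 ≤ y r k)
    (ε : ℝ) (hε : 0 ≤ ε) :
    ∀ r ∈ R, ∀ z v : ZMod d → ℂ,
      Real.sqrt (nsq d (gradZr d y ε r z v))
        ≤ Real.sqrt d * Real.sqrt (lossR d y ε r z v) * Real.sqrt (nsq d v) ∧
      Real.sqrt (nsq d (gradVr d y ε r z v))
        ≤ Real.sqrt d * Real.sqrt (lossR d y ε r z v) * Real.sqrt (nsq d z) := by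
  intro r _ z v
  have final : ∀ (g w : ZMod d → ℂ), nsq d g ≤ d * lossR d y ε r z v * nsq d w →
      Real.sqrt (nsq d g)
        ≤ Real.sqrt d * Real.sqrt (lossR d y ε r z v) * Real.sqrt (nsq d w) := by
    intro g w h
    have hL : 0 ≤ lossR d y ε r z v := Finset.sum_nonneg fun k _ => sq_nonneg _
    have := Real.sqrt_le_sqrt h
    rwa [Real.sqrt_mul (mul_nonneg (Nat.cast_nonneg d) hL),
      Real.sqrt_mul (Nat.cast_nonneg d)] at this
  constructor
  · apply final
    apply nsq_grad_le d y ε hε r z v v (gradZr d y ε r z v) (fun j => j - r) (fun j => j)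
      (Equiv.subRight r).bijective
    intro j; rfl
  · apply final
    apply nsq_grad_le d y ε hε r z v z (gradVr d y ε r z v) (fun j => j + r) (fun j => j + r)
      (Equiv.addRight r).bijective
    intro j; rfl


end Ptycho
end
end
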